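/- Let Q = ℂ^ℓ/Γ with Γ a discrete subgroup, let V be the real span of Γ in ℂ^ℓ, and suppose V is a real subspace that is not a complex subspace and is proper in ℂ^ℓ. If W is a real complement to V ∩ iV in V containing a lattice W ∩ Γ of full rank in W, then (W + iW)/(W ∩ Γ) is a closed complex subgroup of Q isomorphic to (ℂ^*)^s where s = dim_ℝ W. -/

import Mathlib

open Submodule Set Topology

lemma discrete_of_isolated {M : Type*} [AddGroup M] [TopologicalSpace M]
    [IsTopologicalAddGroup M] (S : AddSubgroup M) (U : Set M) (hUo : IsOpen U)
    (h0 : (0 : M) ∈ U) (h : ∀ x ∈ S, x ∈ U → x = 0) : DiscreteTopology S := by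
  apply discreteTopology_iff_isOpen_singleton_zero.mpr
  have key : ({0} : Set S) = (Subtype.val) ⁻¹' U := by
    ext x
    simp only [Set.mem_singleton_iff, Set.mem_preimage]
    constructor
    · rintro rfl; exact h0
    · intro hx; exact Subtype.ext (h x x.2 hx)
  rw [key]
  exact hUo.preimage continuous_subtype_val

lemma isolated_of_discrete {M : Type*} [AddGroup M] [TopologicalSpace M]
    (S : AddSubgroup M) [DiscreteTopology S] :
    ∃ U : Set M, IsOpen U ∧ (0 : M) ∈ U ∧ ∀ x ∈ S, x ∈ U → x = 0 := by
  have h0 : IsOpen ({0} : Set S) := isOpen_discrete _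
  rw [isOpen_induced_iff] at h0
  obtain ⟨U, hUo, hU⟩ := h0
  refine ⟨U, hUo, ?_, ?_⟩
  · have : (⟨0, S.zero_mem⟩ : S) ∈ (Subtype.val ⁻¹' U : Set S) := by rw [hU]; rfl
    exact this
  · intro x hx hxU
    have : (⟨x, hx⟩ : S) ∈ (Subtype.val ⁻¹' U : Set S) := hxU
    rw [hU] at this
    exact congrArg Subtype.val this


/-- Abstract lemma: if `ψ : G →+ Q` has image `H` and the same kernel as a continuous
surjective hom `E : G →+ A`, with `G` σ-compact and `H`, `A` Baire T2 groups,
then `H ≃ₜ A` as topological groups. -/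
lemma exists_homeo_of_same_kernel {G A Q : Type*}
    [AddCommGroup G] [TopologicalSpace G] [IsTopologicalAddGroup G] [SigmaCompactSpace G]
    [AddCommGroup A] [TopologicalSpace A] [IsTopologicalAddGroup A] [BaireSpace A] [T2Space A]
    [AddCommGroup Q] [TopologicalSpace Q] [IsTopologicalAddGroup Q] [T2Space Q]
    [LocallyCompactSpace Q]
    (H : AddSubgroup Q) (hH : IsClosed (H : Set Q))
    (ψ : G →+ Q) (E : G →+ A) (hψc : Continuous ψ) (hEc : Continuous E)
    (hker : ∀ z, ψ z = 0 ↔ E z = 0)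
    (hEsurj : Function.Surjective E)
    (hrange : ∀ q : Q, q ∈ H ↔ ∃ z, ψ z = q) :
    ∃ e : H ≃ₜ A, ∀ x y, e (x + y) = e x + e y := by
  classical
  haveI : LocallyCompactSpace H := hH.locallyCompactSpace
  haveI : BaireSpace H := inferInstance
  set K : AddSubgroup G := E.ker with hK
  have hKψ : ∀ z, z ∈ K → ψ z = 0 := fun z hz => (hker z).mpr hz
  let θ : G ⧸ K →+ Q := QuotientAddGroup.lift K ψ hKψ
  let Ebar : G ⧸ K →+ A := QuotientAddGroup.lift K E fun z hz => hz
  have hθmk : ∀ z, θ (QuotientAddGroup.mk z) = ψ z := fun z => rfl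
  have hEbarmk : ∀ z, Ebar (QuotientAddGroup.mk z) = E z := fun z => rfl
  haveI : SigmaCompactSpace (G ⧸ K) := by
    rw [← isSigmaCompact_univ_iff, ← (QuotientAddGroup.mk_surjective (s := K)).range_eq]
    exact isSigmaCompact_range QuotientAddGroup.isOpenQuotientMap_mk.continuous
  -- θ' into H
  have hθmem : ∀ q, θ q ∈ H := by
    intro q
    induction q using QuotientAddGroup.induction_on with
    | _ z => exact (hrange _).mpr ⟨z, (hθmk z).symm⟩
  let θ' : G ⧸ K →+ H := θ.codRestrict _ hθmem
  have hθ'inj : Function.Injective θ' := by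
    rw [injective_iff_map_eq_zero]
    intro q hq
    induction q using QuotientAddGroup.induction_on with
    | _ z =>
      have h0 : ψ z = 0 := congrArg Subtype.val hq
      exact (QuotientAddGroup.eq_zero_iff z).mpr ((hker z).mp h0)
  have hθ'surj : Function.Surjective θ' := by
    rintro ⟨q, hq⟩
    obtain ⟨z, hz⟩ := (hrange q).mp hq
    exact ⟨QuotientAddGroup.mk z, Subtype.ext ((hθmk z).trans hz)⟩
  have hθ'cont : Continuous θ' := by
    apply Continuous.subtype_mk
    exact QuotientAddGroup.isOpenQuotientMap_mk.isQuotientMap.continuous_iff.mpr hψc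
  have hθ'open : IsOpenMap θ' := AddMonoidHom.isOpenMap_of_sigmaCompact θ' hθ'surj hθ'cont
  let h1 : (G ⧸ K) ≃ₜ H :=
    (Equiv.ofBijective θ' ⟨hθ'inj, hθ'surj⟩).toHomeomorphOfContinuousOpen
      hθ'cont hθ'open
  -- Ebar is a homeomorphism
  have hEbarinj : Function.Injective Ebar := by
    rw [injective_iff_map_eq_zero]
    intro q hq
    induction q using QuotientAddGroup.induction_on with
    | _ z => exact (QuotientAddGroup.eq_zero_iff z).mpr hq
  have hEbarsurj : Function.Surjective Ebar := by
    intro v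
    obtain ⟨z, hz⟩ := hEsurj v
    exact ⟨QuotientAddGroup.mk z, hz⟩
  have hEbarcont : Continuous Ebar :=
    QuotientAddGroup.isOpenQuotientMap_mk.isQuotientMap.continuous_iff.mpr hEc
  have hEbaropen : IsOpenMap Ebar :=
    AddMonoidHom.isOpenMap_of_sigmaCompact Ebar hEbarsurj hEbarcont
  let h2 : (G ⧸ K) ≃ₜ A :=
    (Equiv.ofBijective Ebar ⟨hEbarinj, hEbarsurj⟩).toHomeomorphOfContinuousOpen
      hEbarcont hEbaropen
  refine ⟨h1.symm.trans h2, ?_⟩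
  intro x y
  have hh1 : ∀ q, h1 q = θ' q := fun q => rfl
  have hsymm_add : h1.symm (x + y) = h1.symm x + h1.symm y := by
    apply hθ'inj
    have e1 : θ' (h1.symm (x + y)) = x + y := h1.apply_symm_apply _
    have e2 : θ' (h1.symm x) = x := h1.apply_symm_apply _
    have e3 : θ' (h1.symm y) = y := h1.apply_symm_apply _
    rw [e1, map_add, e2, e3]
  show h2 (h1.symm (x + y)) = h2 (h1.symm x) + h2 (h1.symm y)
  rw [hsymm_add]
  exact map_add Ebar _ _


noncomputable def cexpUnit : ℂ → ℂˣ := fun z =>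
  ⟨Complex.exp (z * (2 * (Real.pi : ℂ) * Complex.I)),
   Complex.exp (-(z * (2 * (Real.pi : ℂ) * Complex.I))),
   by rw [← Complex.exp_add]; simp, by rw [← Complex.exp_add]; simp⟩

lemma two_pi_I_ne_zero' : (2 * (Real.pi : ℂ) * Complex.I) ≠ 0 := by
  apply mul_ne_zero (mul_ne_zero two_ne_zero _) Complex.I_ne_zero
  exact_mod_cast Real.pi_ne_zero

lemma cexpUnit_val (z : ℂ) :
    (cexpUnit z : ℂ) = Complex.exp (z * (2 * (Real.pi : ℂ) * Complex.I)) := rfl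

lemma cexpUnit_add (a b : ℂ) : cexpUnit (a + b) = cexpUnit a * cexpUnit b := by
  apply Units.ext
  rw [Units.val_mul, cexpUnit_val, cexpUnit_val, cexpUnit_val, ← Complex.exp_add, add_mul]

lemma cexpUnit_eq_one_iff (z : ℂ) : cexpUnit z = 1 ↔ ∃ n : ℤ, z = (n : ℂ) := by
  rw [Units.ext_iff]
  show Complex.exp _ = 1 ↔ _
  rw [Complex.exp_eq_one_iff]
  constructor
  · rintro ⟨n, hn⟩
    exact ⟨n, mul_right_cancel₀ two_pi_I_ne_zero' hn⟩
  · rintro ⟨n, rfl⟩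
    exact ⟨n, rfl⟩

lemma cexpUnit_surjective : Function.Surjective cexpUnit := by
  intro v
  have hv : (v : ℂ) ∈ Set.range Complex.exp := by
    rw [Complex.range_exp]; exact v.ne_zero
  obtain ⟨w, hw⟩ := hv
  refine ⟨w / (2 * (Real.pi : ℂ) * Complex.I), Units.ext ?_⟩
  rw [cexpUnit_val, div_mul_cancel₀ _ two_pi_I_ne_zero', hw]

lemma continuous_cexpUnit : Continuous cexpUnit := by
  rw [Units.continuous_iff]
  constructor
  · exact Complex.continuous_exp.comp (continuous_id.mul continuous_const)
  · show Continuous fun z => Complex.exp (-(z * (2 * (Real.pi : ℂ) * Complex.I)))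
    exact Complex.continuous_exp.comp ((continuous_id.mul continuous_const).neg)

noncomputable def expFun (s : ℕ) : (Fin s → ℂ) → Additive (Fin s → ℂˣ) :=
  fun z => Additive.ofMul (fun i => cexpUnit (z i) : Fin s → ℂˣ)

lemma cexpUnit_zero : cexpUnit 0 = 1 := by
  apply Units.ext
  rw [cexpUnit_val, zero_mul, Complex.exp_zero, Units.val_one]

noncomputable def expHom (s : ℕ) : (Fin s → ℂ) →+ Additive (Fin s → ℂˣ) where
  toFun := expFun s
  map_zero' := by
    show Additive.ofMul (fun i => cexpUnit ((0 : Fin s → ℂ) i) : Fin s → ℂˣ) = 0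
    have : (fun i => cexpUnit ((0 : Fin s → ℂ) i) : Fin s → ℂˣ) = 1 := by
      funext i
      exact cexpUnit_zero
    rw [this]
    rfl
  map_add' := by
    intro a b
    show Additive.ofMul _ = Additive.ofMul _ + Additive.ofMul _
    rw [← ofMul_mul]
    congr 1
    funext i
    exact cexpUnit_add (a i) (b i)

lemma expHom_toMul {s : ℕ} (z : Fin s → ℂ) :
    Additive.toMul (expHom s z) = (fun i => cexpUnit (z i) : Fin s → ℂˣ) := rfl

lemma expHom_eq_zero_iff {s : ℕ} (z : Fin s → ℂ) :
    expHom s z = 0 ↔ ∀ i, ∃ n : ℤ, z i = (n : ℂ) := by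
  constructor
  · intro hz i
    have h1 : (fun i => cexpUnit (z i) : Fin s → ℂˣ) = 1 := by
      have := congrArg Additive.toMul hz
      rw [expHom_toMul] at this
      exact this
    exact (cexpUnit_eq_one_iff (z i)).mp (congrFun h1 i)
  · intro hz
    apply Additive.toMul.injective
    rw [expHom_toMul]
    funext i
    obtain ⟨n, hn⟩ := hz i
    exact (cexpUnit_eq_one_iff (z i)).mpr ⟨n, hn⟩

lemma expHom_surjective {s : ℕ} : Function.Surjective (expHom s) := by
  intro v
  have h : ∀ i, ∃ z, cexpUnit z = Additive.toMul v i := fun i => cexpUnit_surjective _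
  choose z hz using h
  exact ⟨z, Additive.toMul.injective (by rw [expHom_toMul]; exact funext hz)⟩

lemma continuous_expHom {s : ℕ} : Continuous (expHom s) := by
  show Continuous (expFun s)
  unfold expFun
  exact continuous_ofMul.comp (continuous_pi fun i => continuous_cexpUnit.comp (continuous_apply i))

set_option maxHeartbeats 8000000 in
theorem complement_gives_closed_torus_subgroup
    (ℓ : ℕ) (Γ : AddSubgroup (Fin ℓ → ℂ)) [DiscreteTopology Γ]
    (J : (Fin ℓ → ℂ) →ₗ[ℝ] (Fin ℓ → ℂ)) (hJ : ∀ z, J z = Complex.I • z)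
    (V : Submodule ℝ (Fin ℓ → ℂ)) (hV : V = Submodule.span ℝ (Γ : Set (Fin ℓ → ℂ)))
    (hVnotcomplex : ¬ V.map J ≤ V) (hVproper : V ≠ ⊤)
    (W : Submodule ℝ (Fin ℓ → ℂ)) (hWV : W ≤ V)
    (hWdisj : W ⊓ (V ⊓ V.map J) = ⊥) (hWspan : W ⊔ (V ⊓ V.map J) = V)
    (hlattice : Submodule.span ℝ ((W : Set (Fin ℓ → ℂ)) ∩ (Γ : Set (Fin ℓ → ℂ))) = W)
    (s : ℕ) (hs : s = Module.finrank ℝ W) :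
    -- `W + iW` is a complex subspace,
    (W ⊔ W.map J).map J ≤ W ⊔ W.map J ∧
    -- whose image in `Q = ℂ^ℓ/Γ` is closed
    IsClosed (((W ⊔ W.map J : Submodule ℝ (Fin ℓ → ℂ)).toAddSubgroup.map
        (QuotientAddGroup.mk' Γ) : AddSubgroup ((Fin ℓ → ℂ) ⧸ Γ)) : Set ((Fin ℓ → ℂ) ⧸ Γ)) ∧
    -- and isomorphic as a topological group to `(ℂ*)^s`
    ∃ e : ((W ⊔ W.map J : Submodule ℝ (Fin ℓ → ℂ)).toAddSubgroup.map
        (QuotientAddGroup.mk' Γ) : AddSubgroup ((Fin ℓ → ℂ) ⧸ Γ)) ≃ₜ (Fin s → ℂˣ),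
      ∀ x y, e (x + y) = e x * e y := by
  classical
  -- basic facts about J
  have hJJ : ∀ z, J (J z) = -z := by
    intro z
    rw [hJ, hJ, smul_smul, Complex.I_mul_I, neg_smul, one_smul]
  have hJinj : ∀ z, J z = 0 → z = 0 := by
    intro z hz
    have := hJJ z
    rw [hz, map_zero] at this
    simpa using this.symm
  set P : Submodule ℝ (Fin ℓ → ℂ) := W ⊔ W.map J with hPdef
  -- Γ ⊆ V
  have hΓV : (Γ : Set (Fin ℓ → ℂ)) ⊆ V := by rw [hV]; exact Submodule.subset_span
  -- W ⊓ J W = ⊥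
  have hWJW : W ⊓ W.map J = ⊥ := by
    rw [eq_bot_iff, ← hWdisj]
    refine le_inf inf_le_left (le_inf (inf_le_left.trans hWV) ?_)
    exact inf_le_right.trans (Submodule.map_mono hWV)
  -- P ⊓ V = W
  have hPV : P ⊓ V = W := by
    apply le_antisymm
    · rintro x ⟨hxP, hxV⟩
      obtain ⟨w, hw, w', hw', rfl⟩ := Submodule.mem_sup.mp hxP
      obtain ⟨w'', hw'', rfl⟩ := hw'
      have hjv : J w'' ∈ V ⊓ V.map J := by
        refine ⟨?_, Submodule.mem_map_of_mem (hWV hw'')⟩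
        have : J w'' = (w + J w'') - w := by ring_nf
        rw [this]
        exact V.sub_mem hxV (hWV hw)
      have hw''bot : w'' ∈ W ⊓ (V ⊓ V.map J) := by
        refine ⟨hw'', (hWV hw''), ?_⟩
        have : w'' = -(J (J w'')) := by rw [hJJ]; simp
        rw [this]
        exact Submodule.neg_mem _ (Submodule.mem_map_of_mem hjv.1)
      rw [hWdisj] at hw''bot
      simp only [Submodule.mem_bot] at hw''bot
      subst hw''bot
      simpa using hw
    · exact le_inf le_sup_left hWV
  -- P ⊓ (V ⊓ J V) = ⊥
  have hPD : P ⊓ (V ⊓ V.map J) = ⊥ := by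
    rw [eq_bot_iff, ← hWdisj]
    refine le_inf ?_ inf_le_right
    intro x hx
    have : x ∈ P ⊓ V := ⟨hx.1, hx.2.1⟩
    rw [hPV] at this
    exact this
  -- the lattice L = W ∩ Γ inside W
  let L : Submodule ℤ W :=
    { carrier := {x : W | (x : Fin ℓ → ℂ) ∈ Γ}
      add_mem' := fun ha hb => Γ.add_mem ha hb
      zero_mem' := Γ.zero_mem
      smul_mem' := fun n x hx => by
        have : ((n • x : W) : Fin ℓ → ℂ) = n • (x : Fin ℓ → ℂ) := rfl
        simpa [this] using Γ.zsmul_mem hx n }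
  have hLmem : ∀ x : W, x ∈ L ↔ (x : Fin ℓ → ℂ) ∈ Γ := fun x => Iff.rfl
  haveI : DiscreteTopology L := by
    obtain ⟨U, hUo, hU0, hUiso⟩ := isolated_of_discrete Γ
    refine discrete_of_isolated L.toAddSubgroup ((Subtype.val : W → (Fin ℓ → ℂ)) ⁻¹' U)
      (hUo.preimage continuous_subtype_val) hU0 ?_
    intro x hx hxU
    exact Subtype.ext (hUiso _ hx hxU)
  haveI : IsZLattice ℝ L := by
    constructor
    have hmap : Submodule.map W.subtype (Submodule.span ℝ (L : Set W)) =
        Submodule.map W.subtype ⊤ := by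
      rw [Submodule.map_span, Submodule.map_top, Submodule.range_subtype]
      have himg : W.subtype '' (L : Set W) =
          (W : Set (Fin ℓ → ℂ)) ∩ (Γ : Set (Fin ℓ → ℂ)) := by
        ext y
        constructor
        · rintro ⟨x, hx, rfl⟩; exact ⟨x.2, hx⟩
        · rintro ⟨hyW, hyΓ⟩; exact ⟨⟨y, hyW⟩, hyΓ, rfl⟩
      rw [himg, hlattice]
    exact Submodule.map_injective_of_injective W.injective_subtype hmap
  haveI : Module.Free ℤ L := ZLattice.module_free ℝ L
  haveI : Module.Finite ℤ L := ZLattice.module_finite ℝ L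
  have hcard : Fintype.card (Module.Free.ChooseBasisIndex ℤ L) = s := by
    rw [← Module.finrank_eq_card_chooseBasisIndex, ZLattice.rank ℝ L, hs]
  let b0 : Module.Basis (Fin s) ℤ L :=
    (Module.Free.chooseBasis ℤ L).reindex (Fintype.equivFinOfCardEq hcard)
  let b : Module.Basis (Fin s) ℝ W := Module.Basis.ofZLatticeBasis ℝ L b0
  have hbspan : Submodule.span ℤ (Set.range ⇑b) = L := Module.Basis.ofZLatticeBasis_span ℝ L b0
  -- the vectors of the basis, in the ambient space
  let c : Fin s → (Fin ℓ → ℂ) := fun i => (b i : Fin ℓ → ℂ)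
  have hcW : ∀ i, c i ∈ W := fun i => (b i).2
  have hcΓ : ∀ i, c i ∈ Γ := by
    intro i
    have : b i ∈ Submodule.span ℤ (Set.range ⇑b) := Submodule.subset_span ⟨i, rfl⟩
    rw [hbspan] at this
    exact this
  -- real combination map into W and complex combination map
  let g : (Fin s → ℝ) → W := fun x => ∑ i, x i • b i
  let f : (Fin s → ℂ) → (Fin ℓ → ℂ) := fun z => ∑ i, z i • c i
  have hgcoe : ∀ x : Fin s → ℝ, ((g x : W) : Fin ℓ → ℂ) = ∑ i, ((x i : ℂ)) • c i := by
    intro x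
    have : ((g x : W) : Fin ℓ → ℂ) = ∑ i, x i • c i := by
      simp [g, c]
    rw [this]
    refine Finset.sum_congr rfl fun i _ => ?_
    funext j
    simp [Complex.real_smul]
  have hginj : ∀ x : Fin s → ℝ, g x = 0 → x = 0 := by
    intro x hx
    have := Fintype.linearIndependent_iff.mp b.linearIndependent x hx
    funext i
    exact this i
  have hgrepr : ∀ w : W, g (fun i => b.repr w i) = w := by
    intro w
    simpa [g] using b.sum_repr w
  -- decomposition of f
  have hfdec : ∀ z : Fin s → ℂ,
      f z = ((g fun i => (z i).re : W) : Fin ℓ → ℂ)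
        + Complex.I • ((g fun i => (z i).im : W) : Fin ℓ → ℂ) := by
    intro z
    rw [hgcoe, hgcoe, Finset.smul_sum, ← Finset.sum_add_distrib]
    refine Finset.sum_congr rfl fun i _ => ?_
    rw [smul_smul, ← add_smul]
    congr 1
    rw [mul_comm]
    linear_combination (Complex.re_add_im (z i)).symm
  have hfW : ∀ x : Fin s → ℝ, f (fun i => (x i : ℂ)) = ((g x : W) : Fin ℓ → ℂ) := by
    intro x
    rw [hgcoe]
  -- injectivity of f
  have hsumdec : ∀ w w' : W, ((w : Fin ℓ → ℂ) + Complex.I • (w' : Fin ℓ → ℂ) = 0) →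
      w = 0 ∧ w' = 0 := by
    intro w w' hww'
    have hmem : Complex.I • (w' : Fin ℓ → ℂ) ∈ W ⊓ W.map J := by
      constructor
      · have : Complex.I • (w' : Fin ℓ → ℂ) = -(w : Fin ℓ → ℂ) := by
          linear_combination (norm := abel) hww'
        rw [this]; exact W.neg_mem w.2
      · exact ⟨w', w'.2, hJ _⟩
    rw [hWJW] at hmem
    simp only [Submodule.mem_bot] at hmem
    have hw' : (w' : Fin ℓ → ℂ) = 0 := by
      have := smul_eq_zero.mp hmem
      rcases this with h | h
      · exact absurd h Complex.I_ne_zero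
      · exact h
    have hw : (w : Fin ℓ → ℂ) = 0 := by
      have := hww'
      rw [hmem, add_zero] at this
      exact this
    exact ⟨Subtype.ext hw, Subtype.ext hw'⟩
  have hfinj : ∀ z : Fin s → ℂ, f z = 0 → z = 0 := by
    intro z hz
    rw [hfdec] at hz
    obtain ⟨h1, h2⟩ := hsumdec _ _ hz
    have hre := hginj _ h1
    have him := hginj _ h2
    funext i
    have e1 : (z i).re = 0 := congrFun hre i
    have e2 : (z i).im = 0 := congrFun him i
    exact Complex.ext e1 e2
  -- range of f is P
  have hrange : Set.range f = (P : Set (Fin ℓ → ℂ)) := by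
    ext x
    constructor
    · rintro ⟨z, rfl⟩
      rw [hfdec]
      refine Submodule.add_mem_sup (g fun i => (z i).re).2 ?_
      refine ⟨(g fun i => (z i).im : W), (g _).2, ?_⟩
      rw [hJ]
    · intro hx
      obtain ⟨w, hw, w', hw', rfl⟩ := Submodule.mem_sup.mp hx
      obtain ⟨w'', hw'', rfl⟩ := hw'
      refine ⟨fun i => (b.repr ⟨w, hw⟩ i : ℂ) + (b.repr ⟨w'', hw''⟩ i : ℂ) * Complex.I, ?_⟩
      rw [hfdec]
      have hre : (fun i => ((b.repr ⟨w, hw⟩ i : ℂ) + (b.repr ⟨w'', hw''⟩ i : ℂ) * Complex.I).re)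
          = fun i => b.repr ⟨w, hw⟩ i := by funext i; simp
      have him : (fun i => ((b.repr ⟨w, hw⟩ i : ℂ) + (b.repr ⟨w'', hw''⟩ i : ℂ) * Complex.I).im)
          = fun i => b.repr ⟨w'', hw''⟩ i := by funext i; simp
      rw [hre, him, hgrepr, hgrepr, hJ]
  -- f z ∈ Γ iff z has integer coordinates
  have hker : ∀ z : Fin s → ℂ, f z ∈ Γ ↔ ∀ i, ∃ n : ℤ, z i = (n : ℂ) := by
    intro z
    constructor
    · intro hz
      have hzP : f z ∈ P := by
        have hmem : f z ∈ Set.range f := ⟨z, rfl⟩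
        rw [hrange] at hmem
        exact hmem
      have hzW : f z ∈ W := by rw [← hPV]; exact ⟨hzP, hΓV hz⟩
      -- imaginary part vanishes
      have h0 : ((g fun i => (z i).re : W) : Fin ℓ → ℂ)
          + Complex.I • ((g fun i => (z i).im : W) : Fin ℓ → ℂ) - f z = 0 := by
        rw [← hfdec]; simp
      have hmem : Complex.I • ((g fun i => (z i).im : W) : Fin ℓ → ℂ) ∈ W ⊓ W.map J := by
        constructor
        · have : Complex.I • ((g fun i => (z i).im : W) : Fin ℓ → ℂ)
              = f z - ((g fun i => (z i).re : W) : Fin ℓ → ℂ) := by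
            linear_combination (norm := abel) h0
          rw [this]
          exact W.sub_mem hzW (g _).2
        · exact ⟨_, (g _).2, hJ _⟩
      rw [hWJW] at hmem
      simp only [Submodule.mem_bot] at hmem
      have him0 : (g fun i => (z i).im) = 0 := by
        rcases smul_eq_zero.mp hmem with h | h
        · exact absurd h Complex.I_ne_zero
        · exact Subtype.ext h
      have himzero : ∀ i, (z i).im = 0 := fun i => congrFun (hginj _ him0) i
      -- so f z = g (re z) lies in W ∩ Γ = L
      have hfz : f z = ((g fun i => (z i).re : W) : Fin ℓ → ℂ) := by
        rw [hfdec z, him0]; simp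
      have hgL : (g fun i => (z i).re) ∈ L := by
        rw [hLmem, ← hfz]; exact hz
      rw [← hbspan, mem_span_range_iff_exists_fun] at hgL
      obtain ⟨m, hm⟩ := hgL
      have hm' : (g fun i => (m i : ℝ)) = (g fun i => (z i).re) := by
        rw [← hm]
        simp only [g]
        refine Finset.sum_congr rfl fun i _ => ?_
        rw [← Int.cast_smul_eq_zsmul ℝ]
      have hcoords : ∀ i, ((m i : ℝ)) = (z i).re := by
        intro i
        have e1 := congrFun (b.repr_sum_self fun j => (m j : ℝ)) i
        have e2 := congrFun (b.repr_sum_self fun j => (z j).re) i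
        have h1 : (b.repr (g fun j => (m j : ℝ))) i = (b.repr (g fun j => (z j).re)) i := by
          rw [hm']
        rw [show (g fun j => (m j : ℝ)) = ∑ j, (m j : ℝ) • b j from rfl,
            show (g fun j => (z j).re) = ∑ j, (z j).re • b j from rfl] at h1
        rw [e1, e2] at h1
        exact h1
      intro i
      exact ⟨m i, Complex.ext (by simpa using (hcoords i).symm) (by simpa using himzero i)⟩
    · intro hz
      choose n hn using hz
      have : f z = ∑ i, (n i) • c i := by
        refine Finset.sum_congr rfl fun i _ => ?_
        rw [hn i, Int.cast_smul_eq_zsmul]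
      rw [this]
      exact AddSubgroup.sum_mem Γ fun i _ => Γ.zsmul_mem (hcΓ i) _
  -- Part 1 : P is a complex subspace
  have part1 : (W ⊔ W.map J).map J ≤ W ⊔ W.map J := by
    rintro x ⟨y, hy, rfl⟩
    obtain ⟨w, hw, w', hw', rfl⟩ := Submodule.mem_sup.mp hy
    obtain ⟨w'', hw'', rfl⟩ := hw'
    rw [map_add, hJJ]
    exact Submodule.add_mem _ (Submodule.mem_sup_right (Submodule.mem_map_of_mem hw))
      (Submodule.mem_sup_left (W.neg_mem hw''))
  -- a complement C of P containing D = V ⊓ JV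
  set D : Submodule ℝ (Fin ℓ → ℂ) := V ⊓ V.map J with hDdef
  obtain ⟨C₀, hC₀⟩ := Submodule.exists_isCompl (P ⊔ D)
  set C : Submodule ℝ (Fin ℓ → ℂ) := D ⊔ C₀ with hCdef
  have hDC : D ≤ C := le_sup_left
  have hcompl : IsCompl P C := by
    constructor
    · rw [disjoint_iff]
      apply le_antisymm _ bot_le
      rintro x ⟨hxP, hxC⟩
      obtain ⟨d, hd, c0, hc0, rfl⟩ := Submodule.mem_sup.mp hxC
      have hc0mem : c0 ∈ (P ⊔ D) ⊓ C₀ := by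
        constructor
        · have : c0 = (d + c0) - d := by abel
          rw [this]
          exact Submodule.sub_mem _ (Submodule.mem_sup_left hxP) (Submodule.mem_sup_right hd)
        · exact hc0
      rw [hC₀.inf_eq_bot] at hc0mem
      simp only [Submodule.mem_bot] at hc0mem
      subst hc0mem
      have : d ∈ P ⊓ D := ⟨by simpa using hxP, hd⟩
      rw [hPD] at this
      simpa using this
    · rw [codisjoint_iff]
      rw [← sup_assoc]
      exact hC₀.codisjoint.eq_top
  let π : (Fin ℓ → ℂ) →ₗ[ℝ] C := C.linearProjOfIsCompl P hcompl.symm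
  have hπker : ∀ x, π x = 0 ↔ x ∈ P := by
    intro x
    rw [← LinearMap.mem_ker]
    exact SetLike.ext_iff.mp (Submodule.ker_projectionOnto hcompl.symm) x
  have hπcont : Continuous π := π.continuous_of_finiteDimensional
  set T : AddSubgroup C := Γ.map π.toAddMonoidHom with hTdef
  -- fundamental domain bound
  obtain ⟨R, hR⟩ := (ZSpan.fundamentalDomain_isBounded b).subset_closedBall 0
  have hnear : ∀ w : W, ∃ δ : W, δ ∈ L ∧ ‖w - δ‖ ≤ R := by
    intro w
    obtain ⟨v, hv⟩ := (ZSpan.exist_unique_vadd_mem_fundamentalDomain b w).exists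
    have hvL : (v : W) ∈ L := by rw [← hbspan]; exact v.2
    refine ⟨-(v : W), L.neg_mem hvL, ?_⟩
    have hmem := hR hv
    rw [Metric.mem_closedBall, dist_zero_right] at hmem
    have heq : (v +ᵥ w : W) = (v : W) + w := rfl
    rw [heq] at hmem
    rw [sub_neg_eq_add, add_comm]
    exact hmem
  -- antilipschitz bound on D
  let ρ : D →ₗ[ℝ] C := π.comp D.subtype
  have hρker : LinearMap.ker ρ = ⊥ := by
    rw [eq_bot_iff]
    rintro ⟨x, hx⟩ hker
    have hx0 : π x = 0 := hker
    rw [hπker] at hx0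
    have : x ∈ P ⊓ D := ⟨hx0, hx⟩
    rw [hPD] at this
    simpa using this
  obtain ⟨K₀, hK₀pos, hK₀⟩ := ρ.exists_antilipschitzWith hρker
  have hDbound : ∀ u : D, ‖(u : Fin ℓ → ℂ)‖ ≤ K₀ * ‖π (u : Fin ℓ → ℂ)‖ := by
    intro u
    have h := hK₀.le_mul_dist u 0
    rw [dist_zero_right, map_zero, dist_zero_right] at h
    have hρu : ρ u = π (u : Fin ℓ → ℂ) := rfl
    rw [hρu] at h
    exact h
  -- key reduction: small elements of T come from bounded elements of Γ
  have hmain : ∀ t : C, t ∈ T → ‖t‖ < 1 →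
      ∃ γ ∈ Γ, ‖γ‖ ≤ R + K₀ ∧ π γ = t := by
    intro t ht htn
    obtain ⟨γ₀, hγ₀, rfl⟩ := ht
    have hγ₀V : γ₀ ∈ V := hΓV hγ₀
    rw [← hWspan] at hγ₀V
    obtain ⟨w, hw, u, hu, rfl⟩ := Submodule.mem_sup.mp hγ₀V
    have hπw : π w = 0 := (hπker w).mpr (Submodule.mem_sup_left hw)
    have hπγ₀ : π (w + u) = π u := by rw [map_add, hπw, zero_add]
    have hub : ‖u‖ ≤ K₀ := by
      have h1 := hDbound ⟨u, hu⟩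
      have h2 : ‖π u‖ ≤ 1 := by
        have : π.toAddMonoidHom (w + u) = π (w + u) := rfl
        calc ‖π u‖ = ‖π.toAddMonoidHom (w + u)‖ := by rw [this, hπγ₀]
        _ ≤ 1 := le_of_lt htn
      calc ‖u‖ ≤ K₀ * ‖π u‖ := h1
      _ ≤ K₀ * 1 := by
          exact mul_le_mul_of_nonneg_left h2 (le_of_lt (by exact_mod_cast hK₀pos))
      _ = K₀ := mul_one _
    obtain ⟨δ, hδL, hδn⟩ := hnear ⟨w, hw⟩
    refine ⟨(w + u) - (δ : Fin ℓ → ℂ), Γ.sub_mem hγ₀ ((hLmem δ).mp hδL), ?_, ?_⟩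
    · have : (w + u) - (δ : Fin ℓ → ℂ) = (w - (δ : Fin ℓ → ℂ)) + u := by abel
      rw [this]
      have hwd : ‖w - (δ : Fin ℓ → ℂ)‖ ≤ R := hδn
      calc ‖(w - (δ : Fin ℓ → ℂ)) + u‖ ≤ ‖w - (δ : Fin ℓ → ℂ)‖ + ‖u‖ := norm_add_le _ _
      _ ≤ R + K₀ := add_le_add hwd hub
    · have hπδ : π (δ : Fin ℓ → ℂ) = 0 := (hπker _).mpr (Submodule.mem_sup_left δ.2)
      rw [map_sub, hπδ, sub_zero]
      rfl
  -- T is discrete, hence closed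
  haveI : DiscreteTopology T := by
    have hΓclosed : IsClosed (Γ : Set (Fin ℓ → ℂ)) := AddSubgroup.isClosed_of_discrete
    have hcompact : IsCompact ((Γ : Set (Fin ℓ → ℂ)) ∩ Metric.closedBall 0 (R + K₀)) :=
      (isCompact_closedBall 0 (R + K₀)).inter_left hΓclosed
    haveI : DiscreteTopology
        (((Γ : Set (Fin ℓ → ℂ)) ∩ Metric.closedBall 0 (R + K₀)) : Set (Fin ℓ → ℂ)) :=
      DiscreteTopology.of_subset (inferInstance : DiscreteTopology Γ)
        Set.inter_subset_left
    have hfin : ((Γ : Set (Fin ℓ → ℂ)) ∩ Metric.closedBall 0 (R + K₀)).Finite :=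
      hcompact.finite (isDiscrete_iff_discreteTopology.mpr inferInstance)
    have hSfin : ((⇑π '' ((Γ : Set (Fin ℓ → ℂ)) ∩ Metric.closedBall 0 (R + K₀))) \ {0}).Finite :=
      (hfin.image _).subset Set.diff_subset
    have h0 : (0 : C) ∈ (((⇑π '' ((Γ : Set (Fin ℓ → ℂ)) ∩ Metric.closedBall 0 (R + K₀))) \ {0})ᶜ :
        Set C) := fun h => h.2 rfl
    obtain ⟨ε, hεpos, hε⟩ := Metric.isOpen_iff.mp hSfin.isClosed.isOpen_compl _ h0
    apply discrete_of_isolated T (Metric.ball 0 (min ε 1))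
      Metric.isOpen_ball (Metric.mem_ball_self (lt_min hεpos one_pos))
    intro t ht htball
    by_contra htne
    rw [Metric.mem_ball, dist_zero_right, lt_min_iff] at htball
    obtain ⟨γ, hγ, hγn, hγπ⟩ := hmain t ht htball.2
    have htS : t ∈ (⇑π '' ((Γ : Set (Fin ℓ → ℂ)) ∩ Metric.closedBall 0 (R + K₀))) \ {0} := by
      refine ⟨⟨γ, ⟨hγ, by simpa [Metric.mem_closedBall, dist_zero_right] using hγn⟩, hγπ⟩, htne⟩
    have := hε (by rw [Metric.mem_ball, dist_zero_right]; exact htball.1)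
    exact this htS
  have hTclosed : IsClosed (T : Set C) := AddSubgroup.isClosed_of_discrete
  -- Part 2 : the image of P in Q is closed
  have hpre : (QuotientAddGroup.mk' Γ) ⁻¹'
      ((P.toAddSubgroup.map (QuotientAddGroup.mk' Γ) : AddSubgroup ((Fin ℓ → ℂ) ⧸ Γ)) :
        Set ((Fin ℓ → ℂ) ⧸ Γ)) = ⇑π ⁻¹' (T : Set C) := by
    ext x
    simp only [Set.mem_preimage, SetLike.mem_coe, AddSubgroup.mem_map]
    constructor
    · rintro ⟨p, hp, hpx⟩
      have hdiff : -p + x ∈ Γ := by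
        rw [QuotientAddGroup.mk'_eq_mk'] at hpx
        obtain ⟨z, hz, hzx⟩ := hpx
        rw [← hzx]
        simpa using hz
      refine ⟨-p + x, hdiff, ?_⟩
      show π (-p + x) = π x
      have hπp : π p = 0 := (hπker p).mpr hp
      rw [map_add, map_neg, hπp, neg_zero, zero_add]
    · rintro ⟨γ, hγ, hγx⟩
      have hγx' : π γ = π x := hγx
      refine ⟨x - γ, ?_, ?_⟩
      · have : π (x - γ) = 0 := by rw [map_sub, hγx', sub_self]
        exact (hπker _).mp this
      · rw [QuotientAddGroup.mk'_eq_mk']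
        exact ⟨γ, hγ, by abel⟩
  have part2 : IsClosed (((W ⊔ W.map J : Submodule ℝ (Fin ℓ → ℂ)).toAddSubgroup.map
      (QuotientAddGroup.mk' Γ) : AddSubgroup ((Fin ℓ → ℂ) ⧸ Γ)) : Set ((Fin ℓ → ℂ) ⧸ Γ)) := by
    have hq : Topology.IsQuotientMap (QuotientAddGroup.mk (s := Γ)) :=
      QuotientAddGroup.isOpenQuotientMap_mk.isQuotientMap
    rw [← hq.isClosed_preimage]
    have : (QuotientAddGroup.mk (s := Γ)) = ⇑(QuotientAddGroup.mk' Γ) := rfl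
    rw [this, hpre]
    exact hTclosed.preimage hπcont
  refine ⟨part1, part2, ?_⟩
  -- Part 3
  have hfadd : ∀ a b : Fin s → ℂ, f (a + b) = f a + f b := by
    intro a b
    simp only [f, Pi.add_apply, add_smul]
    rw [Finset.sum_add_distrib]
  have hfcont : Continuous f := by
    apply continuous_finset_sum
    intro i _
    exact (continuous_apply i).smul continuous_const
  let fhom : (Fin s → ℂ) →+ (Fin ℓ → ℂ) :=
    { toFun := f
      map_zero' := by simp only [f, Pi.zero_apply, zero_smul, Finset.sum_const_zero]
      map_add' := hfadd }
  let ψ : (Fin s → ℂ) →+ ((Fin ℓ → ℂ) ⧸ Γ) := (QuotientAddGroup.mk' Γ).comp fhom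
  have hψz : ∀ z, ψ z = QuotientAddGroup.mk (f z) := fun z => rfl
  have hψcont : Continuous ψ := by
    have hcoe : ⇑ψ = ⇑(QuotientAddGroup.mk' Γ) ∘ f := rfl
    rw [hcoe]
    exact QuotientAddGroup.isOpenQuotientMap_mk.continuous.comp hfcont
  haveI hΓcl : IsClosed (Γ : Set (Fin ℓ → ℂ)) := AddSubgroup.isClosed_of_discrete
  haveI : LocallyCompactSpace ℂˣ := Units.isOpenEmbedding_val.locallyCompactSpace
  haveI : BaireSpace (Additive (Fin s → ℂˣ)) := inferInstanceAs (BaireSpace (Fin s → ℂˣ))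
  haveI : T2Space (Additive (Fin s → ℂˣ)) := inferInstanceAs (T2Space (Fin s → ℂˣ))
  have hkers : ∀ z, ψ z = 0 ↔ expHom s z = 0 := by
    intro z
    rw [hψz, QuotientAddGroup.eq_zero_iff, hker z, expHom_eq_zero_iff]
  have hranges : ∀ q : (Fin ℓ → ℂ) ⧸ Γ,
      q ∈ (P.toAddSubgroup.map (QuotientAddGroup.mk' Γ) :
        AddSubgroup ((Fin ℓ → ℂ) ⧸ Γ)) ↔ ∃ z, ψ z = q := by
    intro q
    constructor
    · intro hq
      obtain ⟨p, hp, rfl⟩ := AddSubgroup.mem_map.mp hq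
      have hpP : p ∈ P := hp
      have : p ∈ Set.range f := by rw [hrange]; exact hpP
      obtain ⟨z, rfl⟩ := this
      exact ⟨z, rfl⟩
    · rintro ⟨z, rfl⟩
      refine AddSubgroup.mem_map.mpr ⟨f z, ?_, rfl⟩
      show f z ∈ P
      have : f z ∈ Set.range f := ⟨z, rfl⟩
      rw [hrange] at this
      exact this
  obtain ⟨e0, he0⟩ := exists_homeo_of_same_kernel
    (P.toAddSubgroup.map (QuotientAddGroup.mk' Γ)) part2 ψ (expHom s)
    hψcont continuous_expHom hkers expHom_surjective hranges
  let h3 : Additive (Fin s → ℂˣ) ≃ₜ (Fin s → ℂˣ) :=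
    { toEquiv := Additive.toMul
      continuous_toFun := continuous_toMul
      continuous_invFun := continuous_ofMul }
  refine ⟨e0.trans h3, ?_⟩
  intro x y
  show h3 (e0 (x + y)) = h3 (e0 x) * h3 (e0 y)
  rw [he0 x y]
  exact toMul_add _ _
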